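/- Let (Ω, P) be a probability space and let u : Ω → ℝ^n and v : Ω → ℝ^M be random vectors such that all entrywise products u_i u_j, u_i v_k, and v_k v_l are integrable. Set S = E[v vᵀ], let Φ ∈ ℝ^{M×n} satisfy Φᵀ = E[u vᵀ], and assume S is invertible. For a matrix L ∈ ℝ^{M×n}, define m = Lᵀ v and d = u − m. Then E[m mᵀ] + E[m dᵀ] + E[d mᵀ] = Φᵀ S⁻¹ Φ − (S⁻¹Φ − L)ᵀ S (S⁻¹Φ − L). -/
import Mathlib


open MeasureTheory Matrix

/-- Lemma 2 in probabilistic form: with m = Lᵀv and d = u − m,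
E[mmᵀ] + E[mdᵀ] + E[dmᵀ] = Φᵀ S⁻¹ Φ − (S⁻¹Φ − L)ᵀ S (S⁻¹Φ − L). -/
theorem lemma2_probabilistic
    {Ω : Type*} [MeasurableSpace Ω] (P : Measure Ω) [IsProbabilityMeasure P]
    {n M : ℕ} (u : Ω → Fin n → ℝ) (v : Ω → Fin M → ℝ)
    (huu : ∀ i j, Integrable (fun ω => u ω i * u ω j) P)
    (huv : ∀ i k, Integrable (fun ω => u ω i * v ω k) P)
    (hvv : ∀ k l, Integrable (fun ω => v ω k * v ω l) P)
    (S : Matrix (Fin M) (Fin M) ℝ) (Φ L : Matrix (Fin M) (Fin n) ℝ)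
    (hS : S = Matrix.of fun k l => ∫ ω, v ω k * v ω l ∂P)
    (hΦ : Φᵀ = Matrix.of fun i k => ∫ ω, u ω i * v ω k ∂P)
    (hSinv : IsUnit S)
    (m d : Ω → Fin n → ℝ)
    (hm : ∀ ω, m ω = Lᵀ.mulVec (v ω))
    (hd : ∀ ω, d ω = u ω - m ω) :
    (Matrix.of fun i j => ∫ ω, m ω i * m ω j ∂P) +
    (Matrix.of fun i j => ∫ ω, m ω i * d ω j ∂P) +
    (Matrix.of fun i j => ∫ ω, d ω i * m ω j ∂P) =
      Φᵀ * S⁻¹ * Φ - (S⁻¹ * Φ - L)ᵀ * S * (S⁻¹ * Φ - L) := by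
  -- m componentwise
  have hmω : ∀ ω i, m ω i = ∑ k, L k i * v ω k := by
    intro ω i; rw [hm]; simp [Matrix.mulVec, dotProduct]
  -- integrability pieces
  have hmm_int : ∀ i j, Integrable (fun ω => m ω i * m ω j) P := by
    intro i j
    have : (fun ω => m ω i * m ω j)
        = fun ω => ∑ k, ∑ l, L k i * L l j * (v ω k * v ω l) := by
      funext ω; rw [hmω, hmω, Finset.sum_mul_sum]
      exact Finset.sum_congr rfl fun k _ => Finset.sum_congr rfl fun l _ => by ring
    rw [this]
    exact integrable_finset_sum _ fun k _ =>
      integrable_finset_sum _ fun l _ => (hvv k l).const_mul _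
  have hmu_int : ∀ i j, Integrable (fun ω => m ω i * u ω j) P := by
    intro i j
    have : (fun ω => m ω i * u ω j)
        = fun ω => ∑ k, L k i * (u ω j * v ω k) := by
      funext ω; rw [hmω, Finset.sum_mul]
      exact Finset.sum_congr rfl fun k _ => by ring
    rw [this]
    exact integrable_finset_sum _ fun k _ => (huv j k).const_mul _
  have hum_int : ∀ i j, Integrable (fun ω => u ω i * m ω j) P := by
    intro i j
    have : (fun ω => u ω i * m ω j) = fun ω => m ω j * u ω i := by
      funext ω; ring
    rw [this]; exact hmu_int j i
  -- E[mmᵀ] = Lᵀ S L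
  have Emm : (Matrix.of fun i j => ∫ ω, m ω i * m ω j ∂P) = Lᵀ * S * L := by
    ext i j
    have h1 : (fun ω => m ω i * m ω j)
        = fun ω => ∑ k, ∑ l, L k i * L l j * (v ω k * v ω l) := by
      funext ω; rw [hmω, hmω, Finset.sum_mul_sum]
      exact Finset.sum_congr rfl fun k _ => Finset.sum_congr rfl fun l _ => by ring
    have h2 : ∫ ω, m ω i * m ω j ∂P
        = ∑ k, ∑ l, L k i * L l j * ∫ ω, v ω k * v ω l ∂P := by
      rw [h1, integral_finset_sum _ fun k _ =>
        integrable_finset_sum _ fun l _ => (hvv k l).const_mul _]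
      exact Finset.sum_congr rfl fun k _ => by
        rw [integral_finset_sum _ fun l _ => (hvv k l).const_mul _]
        exact Finset.sum_congr rfl fun l _ => integral_const_mul _ _
    simp only [Matrix.of_apply, h2, hS, Matrix.mul_apply, Matrix.transpose_apply,
      Finset.sum_mul]
    rw [Finset.sum_comm]
    exact Finset.sum_congr rfl fun k _ => Finset.sum_congr rfl fun l _ => by ring
  -- E[muᵀ] = Lᵀ Φ
  have Emu : (Matrix.of fun i j => ∫ ω, m ω i * u ω j ∂P) = Lᵀ * Φ := by
    ext i j
    have h1 : (fun ω => m ω i * u ω j)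
        = fun ω => ∑ k, L k i * (u ω j * v ω k) := by
      funext ω; rw [hmω, Finset.sum_mul]
      exact Finset.sum_congr rfl fun k _ => by ring
    have h2 : ∫ ω, m ω i * u ω j ∂P
        = ∑ k, L k i * ∫ ω, u ω j * v ω k ∂P := by
      rw [h1, integral_finset_sum _ fun k _ => (huv j k).const_mul _]
      exact Finset.sum_congr rfl fun k _ => integral_const_mul _ _
    have hΦ' : ∀ k, Φ k j = ∫ ω, u ω j * v ω k ∂P := by
      intro k
      have := congrFun (congrFun hΦ j) k
      simpa [Matrix.transpose_apply] using this
    simp only [Matrix.of_apply, h2, Matrix.mul_apply, Matrix.transpose_apply, hΦ']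
  -- E[umᵀ] = Φᵀ L
  have Eum : (Matrix.of fun i j => ∫ ω, u ω i * m ω j ∂P) = Φᵀ * L := by
    ext i j
    have h1 : (fun ω => u ω i * m ω j)
        = fun ω => ∑ k, (u ω i * v ω k) * L k j := by
      funext ω; rw [hmω, Finset.mul_sum]
      exact Finset.sum_congr rfl fun k _ => by ring
    have h2 : ∫ ω, u ω i * m ω j ∂P
        = ∑ k, (∫ ω, u ω i * v ω k ∂P) * L k j := by
      rw [h1, integral_finset_sum _ fun k _ => (huv i k).mul_const _]
      exact Finset.sum_congr rfl fun k _ => integral_mul_const _ _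
    have hΦ' : ∀ k, Φᵀ i k = ∫ ω, u ω i * v ω k ∂P := by
      intro k; exact congrFun (congrFun hΦ i) k
    simp only [Matrix.of_apply, h2, Matrix.mul_apply, hΦ']
  -- E[mdᵀ] and E[dmᵀ]
  have Emd : (Matrix.of fun i j => ∫ ω, m ω i * d ω j ∂P) = Lᵀ * Φ - Lᵀ * S * L := by
    rw [← Emu, ← Emm]; ext i j
    simp only [Matrix.of_apply, Matrix.sub_apply]
    rw [← integral_sub (hmu_int i j) (hmm_int i j)]
    congr 1; funext ω; rw [hd]; simp [Pi.sub_apply]; ring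
  have Edm : (Matrix.of fun i j => ∫ ω, d ω i * m ω j ∂P) = Φᵀ * L - Lᵀ * S * L := by
    rw [← Eum, ← Emm]; ext i j
    simp only [Matrix.of_apply, Matrix.sub_apply]
    rw [← integral_sub (hum_int i j) (hmm_int i j)]
    congr 1; funext ω; rw [hd]; simp [Pi.sub_apply]; ring
  rw [Emm, Emd, Edm]
  -- algebra
  have hSsym : Sᵀ = S := by
    rw [hS]; ext k l; simp only [Matrix.transpose_apply, Matrix.of_apply]
    congr 1; funext ω; ring
  have hdet : IsUnit S.det := (Matrix.isUnit_iff_isUnit_det S).mp hSinv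
  have h1 : S * S⁻¹ = 1 := Matrix.mul_nonsing_inv S hdet
  have h2 : S⁻¹ * S = 1 := Matrix.nonsing_inv_mul S hdet
  have hinvT : S⁻¹ᵀ = S⁻¹ := by
    calc S⁻¹ᵀ = Sᵀ⁻¹ := Matrix.transpose_nonsing_inv S
    _ = S⁻¹ := by rw [hSsym]
  have e1 : S * (S⁻¹ * Φ) = Φ := by rw [← Matrix.mul_assoc, h1, Matrix.one_mul]
  have expand : (S⁻¹ * Φ - L)ᵀ * S * (S⁻¹ * Φ - L)
      = Φᵀ * S⁻¹ * Φ - Φᵀ * L - Lᵀ * Φ + Lᵀ * S * L := by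
    rw [Matrix.transpose_sub, Matrix.transpose_mul, hinvT]
    rw [Matrix.sub_mul, Matrix.sub_mul, Matrix.mul_sub, Matrix.mul_sub]
    rw [Matrix.mul_assoc (Φᵀ * S⁻¹) S, e1]
    rw [Matrix.mul_assoc Lᵀ S, e1]
    have e3 : Φᵀ * S⁻¹ * S = Φᵀ := by rw [Matrix.mul_assoc, h2, Matrix.mul_one]
    rw [e3]
    abel
  rw [expand]
  abel
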